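/- Bäcklund transformation of the Z_n-Sine-Gordon equation (matrix form). Let n ≥ 1, let Γ be the n×n lower shift matrix over ℂ, let a be a nonzero real number, and let u_k, u'_k : ℝ×ℝ → ℝ (0 ≤ k ≤ n−1) be smooth functions. Define the Z_n-valued matrix functions U(x,t) = Σ_{k=0}^{n−1} u_k(x,t) Γ^k and U'(x,t) = Σ_{k=0}^{n−1} u'_k(x,t) Γ^k. Suppose that ∂_x((U'+U)/2) = a · sin((U'−U)/2) and ∂_t((U'−U)/2) = (1/a) · sin((U'+U)/2) hold everywhere, and that U solves the Z_n-Sine-Gordon equation ∂_t∂_x U = sin U. Then U' also solves the Z_n-Sine-Gordon equation ∂_t∂_x U' = sin U'. -/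

import Mathlib

open Finset NormedSpace


/-- Matrix sine: `sin M = (exp(iM) − exp(−iM))/(2i)`. -/
noncomputable def matSin {n : ℕ} (M : Matrix (Fin n) (Fin n) ℂ) : Matrix (Fin n) (Fin n) ℂ :=
  (2 * Complex.I)⁻¹ • (NormedSpace.exp (Complex.I • M) - NormedSpace.exp ((-Complex.I) • M))

/-- The `n×n` lower shift matrix `Γ`, with `Γ i j = 1` iff `i = j + 1`. -/
def lowerShift (n : ℕ) : Matrix (Fin n) (Fin n) ℂ :=
  Matrix.of fun i j => if (i : ℕ) = (j : ℕ) + 1 then 1 else 0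

/-- Matrix cosine. -/
noncomputable def matCos {n : ℕ} (M : Matrix (Fin n) (Fin n) ℂ) : Matrix (Fin n) (Fin n) ℂ :=
  (2 : ℂ)⁻¹ • (NormedSpace.exp (Complex.I • M) + NormedSpace.exp ((-Complex.I) • M))

namespace ZnAux

variable {n : ℕ}

abbrev Mat (n : ℕ) := Matrix (Fin n) (Fin n) ℂ

noncomputable def Zm (n : ℕ) (c : ℕ → ℂ) : Mat n := ∑ k ∈ range n, c k • lowerShift n ^ k

lemma commute_Zm (c d : ℕ → ℂ) : Commute (Zm n c) (Zm n d) := by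
  refine Commute.sum_left _ _ _ fun k _ => Commute.sum_right _ _ _ fun l _ => ?_
  exact (((Commute.refl (lowerShift n)).pow_pow k l).smul_left _).smul_right _

lemma smul_Zm (z : ℂ) (c : ℕ → ℂ) : z • Zm n c = Zm n fun k => z * c k := by
  rw [Zm, Zm, Finset.smul_sum]
  exact Finset.sum_congr rfl fun k _ => (smul_smul z (c k) _)

lemma lowerShift_pow_eq_zero_of_lt : ∀ (k : ℕ) (i j : Fin n), (i : ℕ) < (j : ℕ) + k →
    (lowerShift n ^ k) i j = 0 := by
  intro k
  induction k with
  | zero =>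
    intro i j h
    rw [pow_zero]
    exact Matrix.one_apply_ne (Fin.ne_of_val_ne (by omega))
  | succ k ih =>
    intro i j h
    rw [pow_succ', Matrix.mul_apply]
    refine Finset.sum_eq_zero fun l _ => ?_
    by_cases hl : (i : ℕ) = (l : ℕ) + 1
    · rw [ih l j (by omega), mul_zero]
    · show (if (i : ℕ) = (l : ℕ) + 1 then (1:ℂ) else 0) * _ = 0
      rw [if_neg hl, zero_mul]

lemma lowerShift_pow_self : (lowerShift n) ^ n = 0 := by
  ext i j
  exact lowerShift_pow_eq_zero_of_lt n i j (by omega)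

/-- representation of a `Zm` with vanishing constant coefficient as `Γ * W` with `W` commuting. -/
lemma shift_mul_rep (c : ℕ → ℂ) (hc0 : c 0 = 0) :
    ∃ W : Mat n, Zm n c = lowerShift n * W ∧ Commute (lowerShift n) W := by
  refine ⟨∑ k ∈ range n, c k • lowerShift n ^ (k - 1), ?_, ?_⟩
  · rw [Zm, Finset.mul_sum]
    refine Finset.sum_congr rfl fun k _ => ?_
    rcases k with _ | k
    · simp [hc0]
    · rw [mul_smul_comm, ← pow_succ', Nat.add_sub_cancel]
  · exact Commute.sum_right _ _ _ fun l _ =>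
      (((Commute.refl (lowerShift n)).pow_right _).smul_right _)

lemma Zm_pow_nil (c : ℕ → ℂ) (hc0 : c 0 = 0) : (Zm n c) ^ n = 0 := by
  obtain ⟨W, hW, hcW⟩ := shift_mul_rep c hc0
  rw [hW, hcW.mul_pow, lowerShift_pow_self, zero_mul]

lemma Zm_pow_mul_nil (hn : 1 ≤ n) (c d : ℕ → ℂ) (hc0 : c 0 = 0) (hd0 : d 0 = 0) :
    (Zm n c) ^ (n - 1) * Zm n d = 0 := by
  obtain ⟨W, hW, hcW⟩ := shift_mul_rep c hc0
  obtain ⟨V, hV, hcV⟩ := shift_mul_rep d hd0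
  rw [hW, hV, hcW.mul_pow]
  calc lowerShift n ^ (n-1) * W ^ (n-1) * (lowerShift n * V)
      = lowerShift n ^ (n-1) * (W ^ (n-1) * lowerShift n) * V := by noncomm_ring
    _ = lowerShift n ^ (n-1) * (lowerShift n * W ^ (n-1)) * V := by
        rw [(hcW.pow_right (n-1)).symm.eq]
    _ = (lowerShift n ^ (n-1) * lowerShift n) * (W ^ (n-1) * V) := by noncomm_ring
    _ = 0 := by
        rw [← pow_succ, Nat.sub_add_cancel hn, lowerShift_pow_self, zero_mul]

lemma Zm_split (hn : 1 ≤ n) (c : ℕ → ℂ) :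
    Zm n c = c 0 • (1 : Mat n) + Zm n (fun k => if k = 0 then 0 else c k) := by
  rw [Zm, Zm]
  have : ∀ k ∈ range n, c k • lowerShift n ^ k
      = (if k = 0 then c 0 else 0) • lowerShift n ^ k
        + (if k = 0 then 0 else c k) • lowerShift n ^ k := by
    intro k _; split <;> simp [*]
  rw [Finset.sum_congr rfl this, Finset.sum_add_distrib]
  congr 1
  rw [Finset.sum_eq_single_of_mem 0 (mem_range.2 hn)]
  · simp
  · intro k _ hk; simp [hk]

lemma exp_smul_one (z : ℂ) : exp (z • (1 : Mat n)) = Complex.exp z • (1 : Mat n) := by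
  rw [Matrix.smul_one_eq_diagonal, Matrix.exp_diagonal]
  have : (exp fun _ : Fin n => z) = fun _ : Fin n => Complex.exp z := by
    funext i
    rw [Pi.coe_exp, ← Complex.exp_eq_exp_ℂ]
  rw [this, ← Matrix.smul_one_eq_diagonal]

lemma exp_nil_eq_sum (c : ℕ → ℂ) (hc0 : c 0 = 0) :
    exp (Zm n c) = ∑ m ∈ range n, ((Nat.factorial m : ℂ))⁻¹ • (Zm n c) ^ m := by
  rw [exp_eq_tsum ℂ]
  refine tsum_eq_sum fun m hm => ?_
  rw [pow_eq_zero_of_le (by simpa using hm) (Zm_pow_nil c hc0), smul_zero]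

lemma exp_Zm (hn : 1 ≤ n) (c : ℕ → ℂ) :
    exp (Zm n c) = Complex.exp (c 0) •
      ∑ m ∈ range n, ((Nat.factorial m : ℂ))⁻¹ • (Zm n (fun k => if k = 0 then 0 else c k)) ^ m := by
  rw [Zm_split hn c, Matrix.exp_add_of_commute _ _ ((Commute.one_left _).smul_left _),
    exp_smul_one, exp_nil_eq_sum _ (by simp), smul_mul_assoc, one_mul]

/-- entrywise derivative of a matrix-valued path -/
def HDA (F : ℝ → Mat n) (F' : Mat n) (s₀ : ℝ) : Prop :=
  ∀ i j, HasDerivAt (fun s => F s i j) (F' i j) s₀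

lemma Zm_apply (c : ℕ → ℂ) (i j : Fin n) :
    Zm n c i j = ∑ k ∈ range n, c k * (lowerShift n ^ k) i j := by
  simp [Zm, Matrix.sum_apply]

lemma HDA.const (C : Mat n) (s₀ : ℝ) : HDA (fun _ => C) 0 s₀ := fun i j => by
  simpa using hasDerivAt_const s₀ (C i j)

lemma HDA.mul {F G : ℝ → Mat n} {F' G' : Mat n} {s₀ : ℝ}
    (hF : HDA F F' s₀) (hG : HDA G G' s₀) :
    HDA (fun s => F s * G s) (F' * G s₀ + F s₀ * G') s₀ := by
  intro i j
  have h := HasDerivAt.fun_sum (fun l (_ : l ∈ (Finset.univ : Finset (Fin n))) =>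
    (hF i l).fun_mul (hG l j))
  have e1 : (fun s => ∑ l, F s i l * G s l j) = fun s => (F s * G s) i j := by
    funext s; rw [Matrix.mul_apply]
  rw [e1] at h
  refine h.congr_deriv ?_
  rw [Matrix.add_apply, Matrix.mul_apply, Matrix.mul_apply, ← Finset.sum_add_distrib]

lemma HDA.smulfun {c : ℝ → ℂ} {c' : ℂ} {F : ℝ → Mat n} {F' : Mat n} {s₀ : ℝ}
    (hc : HasDerivAt c c' s₀) (hF : HDA F F' s₀) :
    HDA (fun s => c s • F s) (c' • F s₀ + c s₀ • F') s₀ := by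
  intro i j
  simpa [Matrix.smul_apply, Matrix.add_apply, smul_eq_mul] using hc.fun_mul (hF i j)

lemma HDA.const_smul (z : ℂ) {F : ℝ → Mat n} {F' : Mat n} {s₀ : ℝ} (hF : HDA F F' s₀) :
    HDA (fun s => z • F s) (z • F') s₀ := by
  intro i j
  simpa [Matrix.smul_apply, smul_eq_mul] using (hF i j).const_mul z

lemma HDA.sub {F G : ℝ → Mat n} {F' G' : Mat n} {s₀ : ℝ}
    (hF : HDA F F' s₀) (hG : HDA G G' s₀) :
    HDA (fun s => F s - G s) (F' - G') s₀ := by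
  intro i j
  simpa [Matrix.sub_apply] using (hF i j).fun_sub (hG i j)

lemma HDA.sum {ι : Type*} (s : Finset ι) {F : ι → ℝ → Mat n} {F' : ι → Mat n} {s₀ : ℝ}
    (h : ∀ m ∈ s, HDA (F m) (F' m) s₀) :
    HDA (fun t => ∑ m ∈ s, F m t) (∑ m ∈ s, F' m) s₀ := by
  intro i j
  have h2 := HasDerivAt.fun_sum (fun m hm => h m hm i j)
  simpa [Matrix.sum_apply] using h2

lemma hda_Zm {c : ℕ → ℝ → ℂ} {c' : ℕ → ℂ} {s₀ : ℝ}
    (hc : ∀ k, HasDerivAt (fun s => c k s) (c' k) s₀) :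
    HDA (fun s => Zm n fun k => c k s) (Zm n c') s₀ := by
  intro i j
  have h := HasDerivAt.fun_sum (fun k (_ : k ∈ range n) => (hc k).mul_const ((lowerShift n ^ k) i j))
  simp only [Zm_apply]
  exact h

lemma HDA.pow_commute {F : ℝ → Mat n} {F' : Mat n} {s₀ : ℝ}
    (hF : HDA F F' s₀) (hc : Commute (F s₀) F') :
    ∀ m : ℕ, HDA (fun s => F s ^ m) ((m : ℂ) • (F s₀ ^ (m - 1) * F')) s₀ := by
  intro m
  induction m with
  | zero => simpa using HDA.const (1 : Mat n) s₀
  | succ m ih =>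
    have h := ih.mul hF
    have e : (fun s => F s ^ m * F s) = fun s => F s ^ (m + 1) := by
      funext s; rw [pow_succ]
    rw [e] at h
    convert h using 1
    rcases m with _ | k
    · simp
    · rw [Nat.add_sub_cancel, Nat.add_sub_cancel, smul_mul_assoc, mul_assoc, ← hc.eq,
        ← mul_assoc, ← pow_succ]
      push_cast
      rw [add_smul, one_smul]

lemma hda_exp_Zm (hn : 1 ≤ n) {c : ℕ → ℝ → ℂ} {c' : ℕ → ℂ} {s₀ : ℝ}
    (hc : ∀ k, HasDerivAt (fun s => c k s) (c' k) s₀) :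
    HDA (fun s => exp (Zm n fun k => c k s))
      (exp (Zm n fun k => c k s₀) * Zm n c') s₀ := by
  obtain ⟨p, rfl⟩ : ∃ p, n = p + 1 := ⟨n - 1, by omega⟩
  set q := p + 1 with hq
  have hNd : HDA (fun s => Zm q fun k => if k = 0 then 0 else c k s)
      (Zm q fun k => if k = 0 then 0 else c' k) s₀ := hda_Zm (fun k => by
    rcases k with _ | k
    · simpa using hasDerivAt_const s₀ (0 : ℂ)
    · simpa using hc (k + 1))
  have hcomm : Commute (Zm q fun k => if k = 0 then 0 else c k s₀)
      (Zm q fun k => if k = 0 then 0 else c' k) := commute_Zm _ _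
  have hGd : HDA (fun s => ∑ m ∈ range q, ((Nat.factorial m : ℂ))⁻¹ •
        (Zm q fun k => if k = 0 then 0 else c k s) ^ m)
      (∑ m ∈ range q, ((Nat.factorial m : ℂ))⁻¹ • ((m : ℂ) •
        ((Zm q fun k => if k = 0 then 0 else c k s₀) ^ (m - 1) *
          Zm q fun k => if k = 0 then 0 else c' k))) s₀ :=
    HDA.sum _ fun m _ => (hNd.pow_commute hcomm m).const_smul _
  have hNp : (Zm q fun k => if k = 0 then 0 else c k s₀) ^ p *
      (Zm q fun k => if k = 0 then 0 else c' k) = 0 := by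
    have h0 := Zm_pow_mul_nil (n := q) hn (fun k => if k = 0 then 0 else c k s₀)
      (fun k => if k = 0 then 0 else c' k) (by simp) (by simp)
    have : q - 1 = p := by omega
    rwa [this] at h0
  have hG' : (∑ m ∈ range q, ((Nat.factorial m : ℂ))⁻¹ • ((m : ℂ) •
        ((Zm q fun k => if k = 0 then 0 else c k s₀) ^ (m - 1) *
          Zm q fun k => if k = 0 then 0 else c' k)))
      = (∑ m ∈ range q, ((Nat.factorial m : ℂ))⁻¹ •
          (Zm q fun k => if k = 0 then 0 else c k s₀) ^ m) *
        (Zm q fun k => if k = 0 then 0 else c' k) := by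
    rw [Finset.sum_mul, hq, Finset.sum_range_succ', Finset.sum_range_succ]
    refine congrArg₂ HAdd.hAdd (Finset.sum_congr rfl fun i _ => ?_) ?_
    · rw [smul_smul, smul_mul_assoc, Nat.add_sub_cancel]
      congr 1
      rw [Nat.factorial_succ]
      push_cast
      have h1 : ((i : ℂ) + 1) ≠ 0 := by
        have h := (Nat.cast_ne_zero (R := ℂ)).mpr (Nat.succ_ne_zero i)
        push_cast at h
        exact h
      have hf : (Nat.factorial i : ℂ) ≠ 0 :=
        (Nat.cast_ne_zero (R := ℂ)).mpr (Nat.factorial_ne_zero i)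
      field_simp
    · rw [smul_mul_assoc, hNp, smul_zero]
      simp
  have hfun : (fun s => exp (Zm q fun k => c k s))
      = fun s => Complex.exp (c 0 s) • ∑ m ∈ range q, ((Nat.factorial m : ℂ))⁻¹ •
          (Zm q fun k => if k = 0 then 0 else c k s) ^ m := by
    funext s
    rw [exp_Zm hn]
  have hexp : HasDerivAt (fun s => Complex.exp (c 0 s)) (Complex.exp (c 0 s₀) * c' 0) s₀ :=
    (hc 0).cexp
  have h := HDA.smulfun hexp hGd
  rw [hG'] at h
  have hval : exp (Zm q fun k => c k s₀) * Zm q c'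
      = (Complex.exp (c 0 s₀) * c' 0) •
          (∑ m ∈ range q, ((Nat.factorial m : ℂ))⁻¹ •
            (Zm q fun k => if k = 0 then 0 else c k s₀) ^ m)
        + Complex.exp (c 0 s₀) •
          ((∑ m ∈ range q, ((Nat.factorial m : ℂ))⁻¹ •
            (Zm q fun k => if k = 0 then 0 else c k s₀) ^ m) *
           (Zm q fun k => if k = 0 then 0 else c' k)) := by
    rw [exp_Zm hn, Zm_split hn c', mul_add, smul_mul_assoc, mul_smul_comm,
      mul_one, smul_smul, smul_mul_assoc]
  rw [hfun, hval]
  exact h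

lemma hda_matSin_Zm (hn : 1 ≤ n) {c : ℕ → ℝ → ℂ} {c' : ℕ → ℂ} {s₀ : ℝ}
    (hc : ∀ k, HasDerivAt (fun s => c k s) (c' k) s₀) :
    HDA (fun s => matSin (Zm n fun k => c k s))
      (matCos (Zm n fun k => c k s₀) * Zm n c') s₀ := by
  have h1 : HDA (fun s => exp (Complex.I • Zm n fun k => c k s))
      (exp (Complex.I • Zm n fun k => c k s₀) * (Complex.I • Zm n c')) s₀ := by
    have h := hda_exp_Zm hn (c := fun k s => Complex.I * c k s)
      (c' := fun k => Complex.I * c' k) (fun k => (hc k).const_mul Complex.I)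
    have hfe : (fun s => exp (Zm n fun k => Complex.I * c k s))
        = fun s => exp (Complex.I • Zm n fun k => c k s) := by
      funext s; rw [smul_Zm]
    have hve : exp (Zm n fun k => Complex.I * c k s₀) * (Zm n fun k => Complex.I * c' k)
        = exp (Complex.I • Zm n fun k => c k s₀) * (Complex.I • Zm n c') := by
      rw [smul_Zm, smul_Zm]
    rw [hfe, hve] at h
    exact h
  have h2 : HDA (fun s => exp ((-Complex.I) • Zm n fun k => c k s))
      (exp ((-Complex.I) • Zm n fun k => c k s₀) * ((-Complex.I) • Zm n c')) s₀ := by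
    have h := hda_exp_Zm hn (c := fun k s => (-Complex.I) * c k s)
      (c' := fun k => (-Complex.I) * c' k) (fun k => (hc k).const_mul (-Complex.I))
    have hfe : (fun s => exp (Zm n fun k => (-Complex.I) * c k s))
        = fun s => exp ((-Complex.I) • Zm n fun k => c k s) := by
      funext s; rw [smul_Zm]
    have hve : exp (Zm n fun k => (-Complex.I) * c k s₀) * (Zm n fun k => (-Complex.I) * c' k)
        = exp ((-Complex.I) • Zm n fun k => c k s₀) * ((-Complex.I) • Zm n c') := by
      rw [smul_Zm, smul_Zm]
    rw [hfe, hve] at h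
    exact h
  have h3 := (h1.sub h2).const_smul ((2 * Complex.I)⁻¹)
  have hfun : (fun s => (2 * Complex.I)⁻¹ •
        (exp (Complex.I • Zm n fun k => c k s) - exp ((-Complex.I) • Zm n fun k => c k s)))
      = fun s => matSin (Zm n fun k => c k s) := by
    funext s; rw [matSin]
  rw [hfun] at h3
  have hval : (2 * Complex.I)⁻¹ •
        (exp (Complex.I • Zm n fun k => c k s₀) * (Complex.I • Zm n c')
          - exp ((-Complex.I) • Zm n fun k => c k s₀) * ((-Complex.I) • Zm n c'))
      = matCos (Zm n fun k => c k s₀) * Zm n c' := by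
    rw [matCos, mul_smul_comm, mul_smul_comm, neg_smul, sub_neg_eq_add, ← smul_add,
      smul_smul, smul_mul_assoc, add_mul]
    congr 1
    have h2I : (2 * Complex.I) ≠ 0 := by simp [Complex.I_ne_zero]
    field_simp
  rw [hval] at h3
  exact h3

lemma matSin_add_formula (ca cb : ℕ → ℂ) :
    matSin (Zm n ca + Zm n cb)
      = (2 : ℂ) • (matCos (Zm n cb) * matSin (Zm n ca)) - matSin (Zm n ca - Zm n cb) := by
  have hAB : Commute (Zm n ca) (Zm n cb) := commute_Zm _ _
  have hIA : ∀ z w : ℂ, Commute (z • Zm n ca) (w • Zm n cb) :=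
    fun z w => (hAB.smul_left z).smul_right w
  have e1 : Complex.I • (Zm n ca + Zm n cb) = Complex.I • Zm n ca + Complex.I • Zm n cb := by
    module
  have e2 : (-Complex.I) • (Zm n ca + Zm n cb)
      = (-Complex.I) • Zm n ca + (-Complex.I) • Zm n cb := by module
  have e3 : Complex.I • (Zm n ca - Zm n cb) = Complex.I • Zm n ca + (-Complex.I) • Zm n cb := by
    module
  have e4 : (-Complex.I) • (Zm n ca - Zm n cb)
      = (-Complex.I) • Zm n ca + Complex.I • Zm n cb := by module
  have hPQ : exp (Complex.I • (Zm n ca + Zm n cb))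
      = exp (Complex.I • Zm n ca) * exp (Complex.I • Zm n cb) := by
    rw [e1, Matrix.exp_add_of_commute _ _ (hIA _ _)]
  have hP'Q' : exp ((-Complex.I) • (Zm n ca + Zm n cb))
      = exp ((-Complex.I) • Zm n ca) * exp ((-Complex.I) • Zm n cb) := by
    rw [e2, Matrix.exp_add_of_commute _ _ (hIA _ _)]
  have hPQ' : exp (Complex.I • (Zm n ca - Zm n cb))
      = exp (Complex.I • Zm n ca) * exp ((-Complex.I) • Zm n cb) := by
    rw [e3, Matrix.exp_add_of_commute _ _ (hIA _ _)]
  have hP'Q : exp ((-Complex.I) • (Zm n ca - Zm n cb))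
      = exp ((-Complex.I) • Zm n ca) * exp (Complex.I • Zm n cb) := by
    rw [e4, Matrix.exp_add_of_commute _ _ (hIA _ _)]
  set P := exp (Complex.I • Zm n ca) with hP
  set P' := exp ((-Complex.I) • Zm n ca) with hP'
  set Q := exp (Complex.I • Zm n cb) with hQ
  set Q' := exp ((-Complex.I) • Zm n cb) with hQ'
  have c1 : Commute P Q := ((hIA _ _).exp)
  have c2 : Commute P' Q := ((hIA _ _).exp)
  have c3 : Commute P Q' := ((hIA _ _).exp)
  have c4 : Commute P' Q' := ((hIA _ _).exp)
  have key : (Q + Q') * (P - P') - (P * Q' - P' * Q) = P * Q - P' * Q' := by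
    rw [add_mul, mul_sub, mul_sub, ← c1.eq, ← c2.eq, ← c3.eq, ← c4.eq]
    abel
  simp only [matSin, matCos]
  rw [hPQ, hP'Q', hPQ', hP'Q]
  rw [smul_mul_assoc, mul_smul_comm, smul_smul, smul_smul]
  have hsc : (2 : ℂ) * 2⁻¹ * (2 * Complex.I)⁻¹ = (2 * Complex.I)⁻¹ := by
    norm_num
  rw [hsc, ← hP, ← hP', ← hQ, ← hQ', ← smul_sub, key]

end ZnAux


lemma hasDerivAt_partial_x {f : ℝ × ℝ → ℂ} (hf : ContDiff ℝ (⊤ : ℕ∞) f) (x' t' : ℝ) :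
    HasDerivAt (fun x'' => f (x'', t')) (fderiv ℝ f (x', t') (1, 0)) x' := by
  have h1 : HasFDerivAt f (fderiv ℝ f (x', t')) (x', t') :=
    (hf.differentiable (by simp) (x', t')).hasFDerivAt
  have h2 : HasDerivAt (fun x'' : ℝ => (x'', t')) ((1 : ℝ), (0 : ℝ)) x' :=
    (hasDerivAt_id x').prodMk (hasDerivAt_const x' t')
  exact h1.comp_hasDerivAt x' h2

lemma hasDerivAt_partial_t {f : ℝ × ℝ → ℂ} (hf : ContDiff ℝ (⊤ : ℕ∞) f) (x' t' : ℝ) :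
    HasDerivAt (fun t'' => f (x', t'')) (fderiv ℝ f (x', t') (0, 1)) t' := by
  have h1 : HasFDerivAt f (fderiv ℝ f (x', t')) (x', t') :=
    (hf.differentiable (by simp) (x', t')).hasFDerivAt
  have h2 : HasDerivAt (fun t'' : ℝ => (x', t'')) ((0 : ℝ), (1 : ℝ)) t' :=
    (hasDerivAt_const t' x').prodMk (hasDerivAt_id t')
  exact h1.comp_hasDerivAt t' h2

lemma diffAt_partial_t {f : ℝ × ℝ → ℂ} (hf : ContDiff ℝ (⊤ : ℕ∞) f) (x t : ℝ) :
    DifferentiableAt ℝ (fun t' => fderiv ℝ f (x, t') (1, 0)) t := by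
  have hfd : ContDiff ℝ (⊤ : ℕ∞) (fderiv ℝ f) := hf.fderiv_right (by simp)
  have h1 : DifferentiableAt ℝ (fun t' : ℝ => (x, t')) t :=
    (differentiableAt_const x).prodMk differentiableAt_id
  have h2 : DifferentiableAt ℝ (fderiv ℝ f) (x, t) :=
    (hfd.differentiable (by simp)).differentiableAt
  exact ((ContinuousLinearMap.apply ℝ ℂ ((1 : ℝ), (0 : ℝ))).differentiable.differentiableAt).comp
    t (h2.comp t h1)

/-- Bäcklund transformation of the `Z_n`-Sine-Gordon equation (matrix form).
If `∂_x((U'+U)/2) = a·sin((U'−U)/2)`, `∂_t((U'−U)/2) = (1/a)·sin((U'+U)/2)` (entrywise),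
and `U` solves `∂_t∂_x U = sin U`, then `U'` solves `∂_t∂_x U' = sin U'`. -/
theorem Zn_sineGordon_backlund (n : ℕ) (hn : 1 ≤ n) (a : ℝ) (ha : a ≠ 0)
    (u u' : ℕ → ℝ → ℝ → ℝ)
    (hu : ∀ k, ContDiff ℝ (⊤ : ℕ∞) fun p : ℝ × ℝ => u k p.1 p.2)
    (hu' : ∀ k, ContDiff ℝ (⊤ : ℕ∞) fun p : ℝ × ℝ => u' k p.1 p.2)
    (U U' : ℝ → ℝ → Matrix (Fin n) (Fin n) ℂ)
    (hU : ∀ x t, U x t = ∑ k ∈ Finset.range n, (u k x t : ℂ) • lowerShift n ^ k)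
    (hU' : ∀ x t, U' x t = ∑ k ∈ Finset.range n, (u' k x t : ℂ) • lowerShift n ^ k)
    (hBx : ∀ (x t : ℝ) (i j : Fin n),
      deriv (fun x' => ((2 : ℂ)⁻¹ • (U' x' t + U x' t)) i j) x
        = ((a : ℂ) • matSin ((2 : ℂ)⁻¹ • (U' x t - U x t))) i j)
    (hBt : ∀ (x t : ℝ) (i j : Fin n),
      deriv (fun t' => ((2 : ℂ)⁻¹ • (U' x t' - U x t')) i j) t
        = ((a : ℂ)⁻¹ • matSin ((2 : ℂ)⁻¹ • (U' x t + U x t))) i j)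
    (hSG : ∀ (x t : ℝ) (i j : Fin n),
      deriv (fun t' => deriv (fun x' => U x' t' i j) x) t = matSin (U x t) i j) :
    ∀ (x t : ℝ) (i j : Fin n),
      deriv (fun t' => deriv (fun x' => U' x' t' i j) x) t = matSin (U' x t) i j := by
  classical
  intro x t i j
  set ca : ℕ → ℝ → ℝ → ℂ :=
    fun k X T => (2 : ℂ)⁻¹ * ((u' k X T : ℂ) + (u k X T : ℂ)) with hca
  set cb : ℕ → ℝ → ℝ → ℂ :=
    fun k X T => (2 : ℂ)⁻¹ * ((u' k X T : ℂ) - (u k X T : ℂ)) with hcb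
  -- smoothness of the complex coefficient functions
  have husC : ∀ k, ContDiff ℝ (⊤ : ℕ∞) fun p : ℝ × ℝ => ((u k p.1 p.2 : ℝ) : ℂ) :=
    fun k => (Complex.ofRealCLM.contDiff).comp (hu k)
  have hus'C : ∀ k, ContDiff ℝ (⊤ : ℕ∞) fun p : ℝ × ℝ => ((u' k p.1 p.2 : ℝ) : ℂ) :=
    fun k => (Complex.ofRealCLM.contDiff).comp (hu' k)
  have hcaC : ∀ k, ContDiff ℝ (⊤ : ℕ∞) fun p : ℝ × ℝ => ca k p.1 p.2 :=
    fun k => contDiff_const.mul ((hus'C k).add (husC k))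
  have hcbC : ∀ k, ContDiff ℝ (⊤ : ℕ∞) fun p : ℝ × ℝ => cb k p.1 p.2 :=
    fun k => contDiff_const.mul ((hus'C k).sub (husC k))
  -- matrix identities
  have hUZ : ∀ X T, U X T = ZnAux.Zm n fun k => ((u k X T : ℝ) : ℂ) := fun X T => hU X T
  have hU'Z : ∀ X T, U' X T = ZnAux.Zm n fun k => ((u' k X T : ℝ) : ℂ) := fun X T => hU' X T
  have hA : ∀ X T, (2 : ℂ)⁻¹ • (U' X T + U X T) = ZnAux.Zm n fun k => ca k X T := by
    intro X T
    rw [hUZ, hU'Z, ZnAux.Zm, ZnAux.Zm, ZnAux.Zm, ← Finset.sum_add_distrib, Finset.smul_sum]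
    exact Finset.sum_congr rfl fun k _ => by rw [← add_smul, smul_smul]
  have hB : ∀ X T, (2 : ℂ)⁻¹ • (U' X T - U X T) = ZnAux.Zm n fun k => cb k X T := by
    intro X T
    rw [hUZ, hU'Z, ZnAux.Zm, ZnAux.Zm, ZnAux.Zm, ← Finset.sum_sub_distrib, Finset.smul_sum]
    exact Finset.sum_congr rfl fun k _ => by rw [← sub_smul, smul_smul]
  have hU'eq : U' x t = ZnAux.Zm n (fun k => ca k x t) + ZnAux.Zm n (fun k => cb k x t) := by
    rw [← hA x t, ← hB x t]
    module
  have hUeq : U x t = ZnAux.Zm n (fun k => ca k x t) - ZnAux.Zm n (fun k => cb k x t) := by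
    rw [← hA x t, ← hB x t]
    module
  -- Step A: the inner x-derivative, for every t'
  have hinner : ∀ t', deriv (fun x' => U' x' t' i j) x
      = 2 * ((a : ℂ) * matSin (ZnAux.Zm n fun k => cb k x t') i j)
        - deriv (fun x' => U x' t' i j) x := by
    intro t'
    have hAx : ZnAux.HDA (fun x' => ZnAux.Zm n fun k => ca k x' t')
        (ZnAux.Zm n fun k => deriv (fun x'' => ca k x'' t') x) x :=
      ZnAux.hda_Zm fun k =>
        ((hasDerivAt_partial_x (hcaC k) x t').differentiableAt).hasDerivAt
    have hUx : ZnAux.HDA (fun x' => ZnAux.Zm n fun k => ((u k x' t' : ℝ) : ℂ))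
        (ZnAux.Zm n fun k => deriv (fun x'' => ((u k x'' t' : ℝ) : ℂ)) x) x :=
      ZnAux.hda_Zm fun k =>
        ((hasDerivAt_partial_x (husC k) x t').differentiableAt).hasDerivAt
    have e : (fun x' => U' x' t' i j)
        = fun x' => 2 * (ZnAux.Zm n (fun k => ca k x' t') i j)
            - ZnAux.Zm n (fun k => ((u k x' t' : ℝ) : ℂ)) i j := by
      funext x'
      rw [← hA x' t', ← hUZ x' t']
      simp only [Matrix.smul_apply, Matrix.add_apply, smul_eq_mul]
      ring
    have hcomb : HasDerivAt (fun x' => 2 * (ZnAux.Zm n (fun k => ca k x' t') i j)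
          - ZnAux.Zm n (fun k => ((u k x' t' : ℝ) : ℂ)) i j)
        (2 * (ZnAux.Zm n (fun k => deriv (fun x'' => ca k x'' t') x) i j)
          - ZnAux.Zm n (fun k => deriv (fun x'' => ((u k x'' t' : ℝ) : ℂ)) x) i j) x :=
      ((hAx i j).const_mul 2).sub (hUx i j)
    rw [e, hcomb.deriv]
    have hd1 : ZnAux.Zm n (fun k => deriv (fun x'' => ca k x'' t') x) i j
        = (a : ℂ) * matSin (ZnAux.Zm n fun k => cb k x t') i j := by
      rw [← (hAx i j).deriv,
        show (fun x' => ZnAux.Zm n (fun k => ca k x' t') i j)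
          = fun x' => ((2 : ℂ)⁻¹ • (U' x' t' + U x' t')) i j from
          funext fun x' => by rw [hA x' t'],
        hBx x t' i j, hB x t', Matrix.smul_apply, smul_eq_mul]
    have hd2 : ZnAux.Zm n (fun k => deriv (fun x'' => ((u k x'' t' : ℝ) : ℂ)) x) i j
        = deriv (fun x' => U x' t' i j) x := by
      rw [← (hUx i j).deriv]
      congr 1
      funext x'
      show ZnAux.Zm n (fun k => ((u k x' t' : ℝ) : ℂ)) i j = U x' t' i j
      rw [hUZ x' t']
    rw [hd1, hd2]
  rw [funext hinner]
  -- Step B: differentiate in t at t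
  have hdbt : ZnAux.HDA (fun t' => ZnAux.Zm n fun k => cb k x t')
      (ZnAux.Zm n fun k => deriv (fun t'' => cb k x t'') t) t :=
    ZnAux.hda_Zm fun k =>
      ((hasDerivAt_partial_t (hcbC k) x t).differentiableAt).hasDerivAt
  have hsin : ZnAux.HDA (fun t' => matSin (ZnAux.Zm n fun k => cb k x t'))
      (matCos (ZnAux.Zm n fun k => cb k x t)
        * ZnAux.Zm n fun k => deriv (fun t'' => cb k x t'') t) t :=
    ZnAux.hda_matSin_Zm hn fun k =>
      ((hasDerivAt_partial_t (hcbC k) x t).differentiableAt).hasDerivAt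
  have hP1 : HasDerivAt (fun t' => 2 * ((a : ℂ) * matSin (ZnAux.Zm n fun k => cb k x t') i j))
      (2 * ((a : ℂ) * ((matCos (ZnAux.Zm n fun k => cb k x t)
        * ZnAux.Zm n fun k => deriv (fun t'' => cb k x t'') t) i j))) t :=
    (((hsin i j).const_mul (a : ℂ)).const_mul 2)
  -- the U-part is differentiable in t
  have hgC : ContDiff ℝ (⊤ : ℕ∞) fun p : ℝ × ℝ => U p.1 p.2 i j := by
    have e : (fun p : ℝ × ℝ => U p.1 p.2 i j)
        = fun p : ℝ × ℝ => ∑ k ∈ Finset.range n,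
            ((u k p.1 p.2 : ℝ) : ℂ) * (lowerShift n ^ k) i j := by
      funext p
      rw [hUZ p.1 p.2, ZnAux.Zm_apply]
    rw [e]
    exact ContDiff.sum fun k _ => (husC k).mul contDiff_const
  have hP2fun : (fun t' => deriv (fun x' => U x' t' i j) x)
      = fun t' => fderiv ℝ (fun p : ℝ × ℝ => U p.1 p.2 i j) (x, t') (1, 0) := by
    funext t'
    exact (hasDerivAt_partial_x hgC x t').deriv
  have hP2diffAt : DifferentiableAt ℝ (fun t' => deriv (fun x' => U x' t' i j) x) t := by
    rw [hP2fun]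
    exact diffAt_partial_t hgC x t
  have hP2 : HasDerivAt (fun t' => deriv (fun x' => U x' t' i j) x)
      (matSin (U x t) i j) t := by
    have h := hP2diffAt.hasDerivAt
    rwa [hSG x t i j] at h
  rw [(hP1.fun_sub hP2).deriv]
  -- Step C: identify the coefficient-derivative matrix via hBt
  have hZdbt : (ZnAux.Zm n fun k => deriv (fun t'' => cb k x t'') t)
      = (a : ℂ)⁻¹ • matSin (ZnAux.Zm n fun k => ca k x t) := by
    ext i' j'
    rw [← (hdbt i' j').deriv,
      show (fun t' => ZnAux.Zm n (fun k => cb k x t') i' j')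
        = fun t' => ((2 : ℂ)⁻¹ • (U' x t' - U x t')) i' j' from
        funext fun t' => by rw [hB x t'],
      hBt x t i' j', hA x t]
  rw [hZdbt, mul_smul_comm]
  -- Step D: the sine addition formula
  have hkey := ZnAux.matSin_add_formula (n := n) (fun k => ca k x t) (fun k => cb k x t)
  rw [← hU'eq, ← hUeq] at hkey
  rw [hkey]
  have hane : (a : ℂ) ≠ 0 := by
    simpa using ha
  simp only [Matrix.sub_apply, Matrix.smul_apply, smul_eq_mul]
  field_simp
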